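/- Let f ∈ ℝ[z₁,…,zₙ] be homogeneous and nonzero. Then 𝓘(f) ≠ ℝⁿ if and only if f is hyperbolic with respect to some vector e ∈ ℝⁿ. -/

import Mathlib

open MvPolynomial

/-- The imaginary projection of a polynomial `f ∈ ℂ[z₁,…,zₙ]`. -/
def imagProj {n : ℕ} (f : MvPolynomial (Fin n) ℂ) : Set (Fin n → ℝ) :=
  {y | ∃ z : Fin n → ℂ, eval z f = 0 ∧ (fun j => (z j).im) = y}

lemma eval_mul_homog {n d : ℕ} {f : MvPolynomial (Fin n) ℂ} (hf : f.IsHomogeneous d)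
    (c : ℂ) (z : Fin n → ℂ) :
    eval (fun j => c * z j) f = c ^ d * eval z f := by
  rw [eval_eq', eval_eq', Finset.mul_sum]
  apply Finset.sum_congr rfl
  intro m hm
  have hd : ∑ j, m j = d := by
    have := hf (MvPolynomial.mem_support_iff.mp hm)
    simpa [Finsupp.weight, Finsupp.linearCombination, Finsupp.sum_fintype] using this
  calc MvPolynomial.coeff m f * ∏ j, (c * z j) ^ m j
      = MvPolynomial.coeff m f * ((∏ j, c ^ m j) * ∏ j, z j ^ m j) := by
        rw [← Finset.prod_mul_distrib]; simp [mul_pow]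
    _ = c ^ d * (MvPolynomial.coeff m f * ∏ j, z j ^ m j) := by
        rw [Finset.prod_pow_eq_pow_sum, hd]; ring

theorem imagProj_ne_univ_iff_hyperbolic {n d : ℕ} (f : MvPolynomial (Fin n) ℝ)
    (hf : f ≠ 0) (hhom : f.IsHomogeneous d) :
    imagProj (map (algebraMap ℝ ℂ) f) ≠ Set.univ
      ↔ ∃ e : Fin n → ℝ, eval e f ≠ 0 ∧
          ∀ x : Fin n → ℝ, ∀ t : ℂ,
            eval (fun j => (x j : ℂ) + t * (e j : ℂ)) (map (algebraMap ℝ ℂ) f) = 0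
              → t.im = 0 := by
  set F := map (algebraMap ℝ ℂ) f with hF
  have hFhom : F.IsHomogeneous d := hhom.map _
  constructor
  · intro h
    obtain ⟨e, he⟩ : ∃ e : Fin n → ℝ, e ∉ imagProj F := by
      by_contra hc
      push_neg at hc
      exact h (Set.eq_univ_of_forall hc)
    refine ⟨e, ?_, ?_⟩
    · intro h0
      apply he
      refine ⟨fun j => Complex.I * (e j : ℂ), ?_, ?_⟩
      · rw [eval_mul_homog hFhom]
        have : eval (fun j => ((e j : ℝ) : ℂ)) F = ((eval e f : ℝ) : ℂ) := by
          rw [hF, eval_map]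
          simp [eval₂_eq, eval_eq]
        rw [this, h0]
        simp
      · funext j; simp
    · intro x t ht
      by_contra hb
      apply he
      set b := t.im with hb'
      refine ⟨fun j => (b : ℂ)⁻¹ * ((x j : ℂ) + t * (e j : ℂ)), ?_, ?_⟩
      · rw [eval_mul_homog hFhom, ht, mul_zero]
      · funext j
        have hbne : (b : ℂ) ≠ 0 := by exact_mod_cast hb
        rw [show ((b : ℂ)⁻¹ : ℂ) = ((b⁻¹ : ℝ) : ℂ) by push_cast; ring]
        simp [Complex.ofReal_mul, Complex.add_im, Complex.mul_im]
        field_simp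
        rw [hb']
  · rintro ⟨e, he0, hhyp⟩ h
    have : e ∈ imagProj F := h ▸ Set.mem_univ e
    obtain ⟨z, hz0, hzim⟩ := this
    have ht := hhyp (fun j => (z j).re) Complex.I ?_
    · simp at ht
    · have : (fun j => ((((z j).re : ℝ)) : ℂ) + Complex.I * ((e j : ℝ) : ℂ)) = z := by
        funext j
        have : (e j : ℝ) = (z j).im := by rw [← hzim]
        rw [this]
        simp [Complex.ext_iff]
      rw [this]
      exact hz0
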